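/- Let A be a unital ℓ-algebra and p ∈ A an idempotent. If there exists an idempotent p(t) in A[t] with p(0) = 1 and p(1) = p, then p = 1. -/

import Mathlib

/-- If an idempotent `p` in a unital algebra `A` over a commutative ring `ℓ`
is connected to `1` by an idempotent of the polynomial ring `A[t]`, then `p = 1`. -/
theorem stmt1 (ℓ : Type*) [CommRing ℓ] (A : Type*) [Ring A] [Algebra ℓ A]
    (p : A) (hp : p * p = p)
    (h : ∃ q : Polynomial A, q * q = q ∧ q.eval 0 = 1 ∧ q.eval 1 = p) :
    p = 1 := by
  obtain ⟨q, hq, h0, h1⟩ := h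
  set s : Polynomial A := q - 1 with hs_def
  have hs : s * s = -s := by
    have : (q - 1) * (q - 1) = q * q - q - q + 1 := by noncomm_ring
    rw [hs_def, this, hq]; noncomm_ring
  have hs0 : s.coeff 0 = 0 := by
    have : q.coeff 0 = 1 := by rwa [Polynomial.coeff_zero_eq_eval_zero]
    simp [hs_def, this]
  have hszero : s = 0 := by
    by_contra hne
    set d := s.natTrailingDegree with hd
    have hdpos : 0 < d := Nat.pos_of_ne_zero
      (Polynomial.natTrailingDegree_ne_zero.mpr ⟨hne, hs0⟩)
    have hcoeff : (s * s).coeff d = 0 := by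
      rw [Polynomial.coeff_mul]
      apply Finset.sum_eq_zero
      rintro ⟨i, j⟩ hij
      rw [Finset.HasAntidiagonal.mem_antidiagonal] at hij
      rcases lt_or_ge i d with hi | hi
      · rw [Polynomial.coeff_eq_zero_of_lt_natTrailingDegree hi, zero_mul]
      · have : j = 0 := by omega
        have hjlt : j < d := by omega
        rw [Polynomial.coeff_eq_zero_of_lt_natTrailingDegree hjlt, mul_zero]
    rw [hs, Polynomial.coeff_neg, neg_eq_zero] at hcoeff
    exact hne (Polynomial.coeff_natTrailingDegree_eq_zero.mp hcoeff)
  have : q = 1 := by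
    have := hszero
    rw [hs_def, sub_eq_zero] at this
    exact this
  rw [← h1, this, Polynomial.eval_one]
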